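/- Neither of the families Σ_gvs and Σ_local dominates the other: there exist a finite instance set X, a finite hypothesis class H of functions X → Bool, and an initial hypothesis h0 ∈ H such that Σ_gvs-TD_{X,H,h0} < Σ_local-TD_{X,H,h0}, and there exist (possibly different) X, H, h0 such that Σ_local-TD_{X,H,h0} < Σ_gvs-TD_{X,H,h0}. -/
import Mathlib


open scoped Classical

/-- A preference function `σ(h'; H', h)`: `h'` is a candidate hypothesis, `H'` the current
version space, `h` the learner's current hypothesis. -/
abbrev Pref (X : Type) : Type := (X → Bool) → Finset (X → Bool) → (X → Bool) → ℝ

variable {X : Type}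

/-- `h` is consistent with the labeled examples in `S`. -/
def ConsistentWith (h : X → Bool) (S : Finset (X × Bool)) : Prop := ∀ z ∈ S, h z.1 = z.2

/-- Version space of `H'` induced by the labeled examples `S`. -/
noncomputable def verSpace (H' : Finset (X → Bool)) (S : Finset (X × Bool)) :
    Finset (X → Bool) :=
  H'.filter fun h => ∀ z ∈ S, h z.1 = z.2

/-- The set of hypotheses in `H'` most preferred by `σ` given current hypothesis `h`. -/
noncomputable def argminSet (σ : Pref X) (H' : Finset (X → Bool)) (h : X → Bool) :
    Finset (X → Bool) :=
  H'.filter fun h' => ∀ h'' ∈ H', σ h' H' h ≤ σ h'' H' h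

/-- `C_σ(H', h, z)`: the candidate hypotheses most preferred by the learner after
receiving the labeled example `z`. -/
noncomputable def Cand (σ : Pref X) (H' : Finset (X → Bool)) (h : X → Bool) (z : X × Bool) :
    Finset (X → Bool) :=
  argminSet σ (verSpace H' {z}) h

/-- `Dle σ n H' h h*` means the worst-case teaching cost `D_σ(H', h, h*) ≤ n`. -/
def Dle (σ : Pref X) : ℕ → Finset (X → Bool) → (X → Bool) → (X → Bool) → Prop
  | 0, _, _, _ => False
  | n + 1, H', h, hstar =>
      (∃ z : X × Bool, hstar z.1 = z.2 ∧ Cand σ H' h z = {hstar}) ∨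
      (∃ z : X × Bool, hstar z.1 = z.2 ∧
        ∀ h'' ∈ Cand σ H' h z, Dle σ n (verSpace H' {z}) h'' hstar)

/-- The worst-case teaching cost `D_σ(H', h, h*)` (∞ when teaching is impossible). -/
noncomputable def Dval (σ : Pref X) (H' : Finset (X → Bool)) (h hstar : X → Bool) : ℕ∞ :=
  sInf {n : ℕ∞ | ∃ m : ℕ, n = (m : ℕ∞) ∧ Dle σ m H' h hstar}

/-- Teaching dimension `TD_{X,H,h0}(σ) = max_{h* ∈ H} D_σ(H, h0, h*)`. -/
noncomputable def TDpref (Hc : Finset (X → Bool)) (h0 : X → Bool) (σ : Pref X) : ℕ∞ :=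
  ⨆ hstar ∈ Hc, Dval σ Hc h0 hstar

/-- Teaching dimension of a family of preference functions: `Σ-TD = min_{σ ∈ Σ} TD(σ)`. -/
noncomputable def famTD (Hc : Finset (X → Bool)) (h0 : X → Bool) (F : Set (Pref X)) : ℕ∞ :=
  ⨅ σ ∈ F, TDpref Hc h0 σ

/-- A preference function is collusion-free. -/
def CollusionFree (Hc : Finset (X → Bool)) (σ : Pref X) : Prop :=
  ∀ h ∈ Hc, ∀ H' ⊆ Hc, ∀ hhat : X → Bool,
    argminSet σ H' h = {hhat} →
    ∀ S : Finset (X × Bool), ConsistentWith hhat S →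
      argminSet σ (verSpace H' S) hhat = {hhat}

/-- `Σ_const`: collusion-free constant preference functions. -/
def SigmaConst (Hc : Finset (X → Bool)) : Set (Pref X) :=
  {σ | CollusionFree Hc σ ∧ ∃ c : ℝ, ∀ h' H' h, σ h' H' h = c}

/-- `Σ_global`: collusion-free preference functions of the form `g(h')`. -/
def SigmaGlobal (Hc : Finset (X → Bool)) : Set (Pref X) :=
  {σ | CollusionFree Hc σ ∧ ∃ g : (X → Bool) → ℝ, ∀ h' H' h, σ h' H' h = g h'}

/-- `Σ_gvs`: collusion-free preference functions of the form `g(h', H')`. -/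
def SigmaGVS (Hc : Finset (X → Bool)) : Set (Pref X) :=
  {σ | CollusionFree Hc σ ∧
    ∃ g : (X → Bool) → Finset (X → Bool) → ℝ, ∀ h' H' h, σ h' H' h = g h' H'}

/-- `Σ_local`: collusion-free preference functions of the form `g(h', h)`. -/
def SigmaLocal (Hc : Finset (X → Bool)) : Set (Pref X) :=
  {σ | CollusionFree Hc σ ∧ ∃ g : (X → Bool) → (X → Bool) → ℝ, ∀ h' H' h, σ h' H' h = g h' h}

/-- `Σ_lvs`: all collusion-free preference functions. -/
def SigmaLVS (Hc : Finset (X → Bool)) : Set (Pref X) := {σ | CollusionFree Hc σ}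

/-- `T` is a teaching set for `h` w.r.t. the subclass `Hc`. -/
def IsTeachingSet (Hc : Finset (X → Bool)) (h : X → Bool) (T : Finset X) : Prop :=
  ∀ h' ∈ Hc, (∀ x ∈ T, h' x = h x) → h' = h

/-- Size of the minimum teaching set of `h` w.r.t. `Hc`. -/
noncomputable def minTSsize (Hc : Finset (X → Bool)) (h : X → Bool) : ℕ :=
  sInf {k | ∃ T : Finset X, T.card = k ∧ IsTeachingSet Hc h T}

/-- The classical (worst-case) teaching dimension `TD(H)`. -/
noncomputable def TDclassic (Hc : Finset (X → Bool)) : ℕ :=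
  Hc.sup (minTSsize Hc)

/-- Witness for `RTD(H) ≤ k`: an ordering of `H` where each hypothesis has a teaching
set of size at most `k` w.r.t. the remaining hypotheses. -/
def RTDwitness (Hc : Finset (X → Bool)) (k : ℕ) : Prop :=
  ∃ L : List (X → Bool), L.Nodup ∧ L.toFinset = Hc ∧
    ∀ (i : ℕ) (hi : i < L.length), ∃ T : Finset X, T.card ≤ k ∧
      IsTeachingSet (L.drop i).toFinset (L.get ⟨i, hi⟩) T

/-- The recursive teaching dimension `RTD(H)`. -/
noncomputable def RTD (Hc : Finset (X → Bool)) : ℕ := sInf {k | RTDwitness Hc k}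

/-- A teacher mapping is non-clashing on `Hc`. -/
def NonClashing (Hc : Finset (X → Bool)) (T : (X → Bool) → Finset X) : Prop :=
  ∀ h ∈ Hc, ∀ h' ∈ Hc, h ≠ h' →
    ¬ ((∀ x ∈ T h, h' x = h x) ∧ (∀ x ∈ T h', h x = h' x))

/-- The non-clashing teaching dimension `NCTD(H)`. -/
noncomputable def NCTD (Hc : Finset (X → Bool)) : ℕ :=
  sInf {k | ∃ T : (X → Bool) → Finset X, NonClashing Hc T ∧ ∀ h ∈ Hc, (T h).card ≤ k}

/-- `Hc` shatters the set of instances `X'`. -/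
def Shatters (Hc : Finset (X → Bool)) (X' : Finset X) : Prop :=
  ∀ b : X → Bool, ∃ h ∈ Hc, ∀ x ∈ X', h x = b x

/-- The VC dimension `VCD(H, X)`. -/
noncomputable def VCD (Hc : Finset (X → Bool)) : ℕ :=
  sSup {k | ∃ X' : Finset X, X'.card = k ∧ Shatters Hc X'}

section CommonLemmas

variable {X : Type}

lemma verSpace_mem {H' : Finset (X → Bool)} {S : Finset (X × Bool)} {h : X → Bool} :
    h ∈ verSpace H' S ↔ h ∈ H' ∧ ∀ z ∈ S, h z.1 = z.2 := by
  simp [verSpace]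

lemma verSpace_subset (H' : Finset (X → Bool)) (S : Finset (X × Bool)) :
    verSpace H' S ⊆ H' := Finset.filter_subset _ _

lemma verSpace_comm (H' : Finset (X → Bool)) (S1 S2 : Finset (X × Bool)) :
    verSpace (verSpace H' S1) S2 = verSpace (verSpace H' S2) S1 := by
  ext h; simp only [verSpace_mem]; tauto

lemma verSpace_pair (H' : Finset (X → Bool)) (z z' : X × Bool) :
    verSpace (verSpace H' {z}) {z'} = verSpace H' {z, z'} := by
  ext h
  simp only [verSpace_mem, Finset.forall_mem_insert, Finset.mem_singleton, forall_eq]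
  tauto

lemma argminSet_mem {σ : Pref X} {H' : Finset (X → Bool)} {h h' : X → Bool} :
    h' ∈ argminSet σ H' h ↔ h' ∈ H' ∧ ∀ h'' ∈ H', σ h' H' h ≤ σ h'' H' h := by
  simp [argminSet]

lemma argminSet_nonempty {σ : Pref X} {H' : Finset (X → Bool)} (hne : H'.Nonempty)
    (h : X → Bool) : (argminSet σ H' h).Nonempty := by
  obtain ⟨a, ha, hmin⟩ := Finset.exists_min_image H' (fun h' => σ h' H' h) hne
  exact ⟨a, argminSet_mem.2 ⟨ha, hmin⟩⟩

lemma Dle_succ_iff {σ : Pref X} {n : ℕ} {H' : Finset (X → Bool)} {h hstar : X → Bool} :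
    Dle σ (n + 1) H' h hstar ↔
      ((∃ z : X × Bool, hstar z.1 = z.2 ∧ Cand σ H' h z = {hstar}) ∨
      (∃ z : X × Bool, hstar z.1 = z.2 ∧
        ∀ h'' ∈ Cand σ H' h z, Dle σ n (verSpace H' {z}) h'' hstar)) := Iff.rfl

lemma Dle_mono {σ : Pref X} : ∀ (n m : ℕ), m ≤ n → ∀ (H' : Finset (X → Bool)) (h hstar : X → Bool),
    Dle σ m H' h hstar → Dle σ n H' h hstar := by
  intro n
  induction n with
  | zero => intro m hm H' h hstar hd; obtain rfl := Nat.le_zero.mp hm; exact hd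
  | succ n ih =>
    intro m hm H' h hstar hd
    match m, hd with
    | 0, hd => exact hd.elim
    | m+1, hd =>
      rcases hd with ⟨z, hz, hc⟩ | ⟨z, hz, hall⟩
      · exact Or.inl ⟨z, hz, hc⟩
      · exact Or.inr ⟨z, hz, fun h'' hmem => ih m (Nat.le_of_succ_le_succ hm) _ _ _ (hall h'' hmem)⟩

lemma Dval_le {σ : Pref X} {H' : Finset (X → Bool)} {h hstar : X → Bool} {m : ℕ}
    (hd : Dle σ m H' h hstar) : Dval σ H' h hstar ≤ (m : ℕ∞) :=
  sInf_le ⟨m, rfl, hd⟩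

lemma le_Dval {σ : Pref X} {H' : Finset (X → Bool)} {h hstar : X → Bool} {k : ℕ}
    (h2 : ∀ m : ℕ, Dle σ m H' h hstar → k ≤ m) : (k : ℕ∞) ≤ Dval σ H' h hstar := by
  refine le_sInf ?_
  rintro n ⟨m, rfl, hd⟩
  exact_mod_cast h2 m hd

lemma TDpref_le {Hc : Finset (X → Bool)} {h0 : X → Bool} {σ : Pref X} {k : ℕ∞}
    (h : ∀ hstar ∈ Hc, Dval σ Hc h0 hstar ≤ k) : TDpref Hc h0 σ ≤ k := iSup₂_le h

lemma le_TDpref {Hc : Finset (X → Bool)} {h0 : X → Bool} {σ : Pref X} {hstar : X → Bool}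
    (hm : hstar ∈ Hc) : Dval σ Hc h0 hstar ≤ TDpref Hc h0 σ :=
  le_biSup (fun h => Dval σ Hc h0 h) hm

lemma famTD_le {Hc : Finset (X → Bool)} {h0 : X → Bool} {F : Set (Pref X)} {σ : Pref X}
    (hσ : σ ∈ F) : famTD Hc h0 F ≤ TDpref Hc h0 σ := iInf₂_le σ hσ

lemma le_famTD {Hc : Finset (X → Bool)} {h0 : X → Bool} {F : Set (Pref X)} {k : ℕ∞}
    (h : ∀ σ ∈ F, k ≤ TDpref Hc h0 σ) : k ≤ famTD Hc h0 F := le_iInf₂ h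

lemma argminSet_nat (gg : (X → Bool) → Finset (X → Bool) → (X → Bool) → ℕ)
    (H' : Finset (X → Bool)) (h : X → Bool) :
    argminSet (fun h' H' h => ((gg h' H' h : ℕ) : ℝ)) H' h
      = H'.filter (fun h' => ∀ h'' ∈ H', gg h' H' h ≤ gg h'' H' h) := by
  ext h'; simp [argminSet, Nat.cast_le]

lemma argminSet_gvs {σ : Pref X} (g : (X → Bool) → Finset (X → Bool) → ℝ)
    (hg : ∀ h' H' h, σ h' H' h = g h' H') (H' : Finset (X → Bool)) (h1 h2 : X → Bool) :
    argminSet σ H' h1 = argminSet σ H' h2 := by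
  ext h'; simp [argminSet, hg]

lemma extract {σ : Pref X} {Hc : Finset (X → Bool)} {h0 hstar : X → Bool}
    (hmem : hstar ∈ Hc) (hd : Dle σ 2 Hc h0 hstar) :
    ∃ S : Finset (X × Bool), (S.image Prod.fst).card ≤ 2 ∧ ConsistentWith hstar S ∧
      ∃ cur, argminSet σ (verSpace Hc S) cur = {hstar} := by
  rcases hd with ⟨z, hz, hc⟩ | ⟨z, hz, hall⟩
  · refine ⟨{z}, ?_, ?_, h0, hc⟩
    · exact le_trans (Finset.card_image_le) (by simp)
    · intro w hw; simp at hw; subst hw; exact hz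
  · have hsne : hstar ∈ verSpace Hc {z} := verSpace_mem.2 ⟨hmem, by simpa using hz⟩
    obtain ⟨h'', hh''⟩ := argminSet_nonempty ⟨hstar, hsne⟩ h0
    rcases hall h'' hh'' with ⟨z', hz', hc'⟩ | ⟨z', hz', hall'⟩
    · refine ⟨{z, z'}, ?_, ?_, h'', ?_⟩
      · exact le_trans (Finset.card_image_le) (Finset.card_insert_le _ _ |>.trans (by simp))
      · intro w hw
        rcases Finset.mem_insert.1 hw with rfl | hw'
        · exact hz
        · simp at hw'; subst hw'; exact hz'
      · rw [← verSpace_pair]; exact hc'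
    · exfalso
      have h2 : hstar ∈ verSpace (verSpace Hc {z}) {z'} :=
        verSpace_mem.2 ⟨hsne, by simpa using hz'⟩
      obtain ⟨h3, hm3⟩ := argminSet_nonempty ⟨hstar, h2⟩ h''
      exact hall' h3 hm3

end CommonLemmas

section DirectionA

/-- The four hypotheses over `X = Bool`. -/
def fFF : Bool → Bool := fun _ => false
def fFT : Bool → Bool := fun x => x
def fTF : Bool → Bool := fun x => !x
def fTT : Bool → Bool := fun _ => true

def gA (h' : Bool → Bool) (V : Finset (Bool → Bool)) : ℕ :=
  if (V = {fFF, fFT} ∧ h' = fFF) ∨ (V = {fFT, fTT} ∧ h' = fFT) ∨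
     (V = {fTF, fTT} ∧ h' = fTT) ∨ (V = {fFF, fTF} ∧ h' = fTF) then 0 else 1

noncomputable def σA : Pref Bool := fun h' H' _ => ((gA h' H' : ℕ) : ℝ)

def vsA (H' : Finset (Bool → Bool)) (S : Finset (Bool × Bool)) : Finset (Bool → Bool) :=
  H'.filter fun h => ∀ z ∈ S, h z.1 = z.2

def amA (H' : Finset (Bool → Bool)) : Finset (Bool → Bool) :=
  H'.filter fun h' => ∀ h'' ∈ H', gA h' H' ≤ gA h'' H'

lemma vsA_eq (H' : Finset (Bool → Bool)) (S : Finset (Bool × Bool)) :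
    verSpace H' S = vsA H' S := by
  ext h; simp [verSpace, vsA]

lemma amA_eq (H' : Finset (Bool → Bool)) (h : Bool → Bool) :
    argminSet σA H' h = amA H' := by
  ext h'; simp [argminSet, amA, σA, Nat.cast_le]

lemma CFA : CollusionFree (Finset.univ : Finset (Bool → Bool)) σA := by
  have key : ∀ (H' : Finset (Bool → Bool)) (hhat : Bool → Bool), amA H' = {hhat} →
      ∀ S : Finset (Bool × Bool), (∀ z ∈ S, hhat z.1 = z.2) → amA (vsA H' S) = {hhat} := by
    decide
  intro h _ H' _ hhat heq S hS
  rw [amA_eq] at heq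
  rw [amA_eq, vsA_eq]
  exact key H' hhat heq S hS

lemma σA_mem : σA ∈ SigmaGVS (Finset.univ : Finset (Bool → Bool)) :=
  ⟨CFA, fun h' H' => ((gA h' H' : ℕ) : ℝ), fun _ _ _ => rfl⟩

lemma teachA (hstar : Bool → Bool) : Dle σA 1 Finset.univ fFF hstar := by
  have key : ∀ hstar : Bool → Bool, ∃ z : Bool × Bool,
      hstar z.1 = z.2 ∧ amA (vsA Finset.univ {z}) = {hstar} := by decide
  obtain ⟨z, hz, hc⟩ := key hstar
  exact Or.inl ⟨z, hz, by rw [Cand, amA_eq, vsA_eq]; exact hc⟩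

lemma upperA : famTD (Finset.univ : Finset (Bool → Bool)) fFF (SigmaGVS Finset.univ) ≤ 1 := by
  refine le_trans (famTD_le σA_mem) (TDpref_le ?_)
  intro hstar _
  simpa using Dval_le (teachA hstar)

lemma bool_partner (m h'' : Bool → Bool) (x : Bool) (hx : h'' x = m x) :
    h'' = m ∨ h'' = fun y => if y = x then m x else !(m y) := by
  by_cases hmo : h'' (!x) = m (!x)
  · left; funext y
    by_cases hyx : y = x
    · rw [hyx, hx]
    · have hy : y = !x := by cases y <;> cases x <;> simp_all
      rw [hy, hmo]
  · right; funext y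
    by_cases hyx : y = x
    · subst hyx; simp [hx]
    · have hy : y = !x := by cases y <;> cases x <;> simp_all
      subst hy
      have : h'' (!x) = !(m (!x)) := by
        cases hv : h'' (!x) <;> cases hv2 : m (!x) <;> simp_all
      simp [this, hyx]

lemma lowerA : (2 : ℕ∞) ≤ famTD (Finset.univ : Finset (Bool → Bool)) fFF (SigmaLocal Finset.univ) := by
  apply le_famTD
  rintro σ ⟨-, g, hg⟩
  obtain ⟨m, -, hmax⟩ := Finset.exists_max_image (Finset.univ : Finset (Bool → Bool))
    (fun h => g h fFF) ⟨fFF, Finset.mem_univ _⟩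
  have hDle1 : ¬ Dle σ 1 Finset.univ fFF m := by
    rintro (⟨z, hz, hc⟩ | ⟨z, hz, hall⟩)
    · set m' : Bool → Bool := fun y => if y = z.1 then m z.1 else !(m y) with hm'
      have hm'm : m' ≠ m := by
        intro hEq
        have h1 : m' (!z.1) = !(m (!z.1)) := by
          simp only [hm']
          rw [if_neg (Bool.not_ne_self z.1)]
        rw [hEq] at h1
        exact (Bool.eq_not_self _).mp h1
      have hm'V : m' ∈ verSpace Finset.univ {z} := by
        refine verSpace_mem.2 ⟨Finset.mem_univ _, ?_⟩
        intro w hw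
        rw [Finset.mem_singleton] at hw; subst hw
        simp only [hm', if_pos rfl, hz]
      have hm'arg : m' ∈ Cand σ Finset.univ fFF z := by
        refine argminSet_mem.2 ⟨hm'V, ?_⟩
        intro h'' hh''
        rw [hg, hg]
        have hcons : h'' z.1 = m z.1 := by
          have := (verSpace_mem.1 hh'').2 z (Finset.mem_singleton_self z)
          rw [this, hz]
        rcases bool_partner m h'' z.1 hcons with h1 | h2
        · rw [h1]; exact hmax m' (Finset.mem_univ _)
        · rw [h2, ← hm']
      rw [hc, Finset.mem_singleton] at hm'arg
      exact hm'm hm'arg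
    · have hmV : m ∈ verSpace Finset.univ {z} :=
        verSpace_mem.2 ⟨Finset.mem_univ _, by simpa using hz⟩
      obtain ⟨h3, hm3⟩ := argminSet_nonempty ⟨m, hmV⟩ fFF
      exact hall h3 hm3
  refine le_trans ?_ (le_TDpref (Finset.mem_univ m))
  have : ((2:ℕ) : ℕ∞) ≤ Dval σ Finset.univ fFF m := by
    apply le_Dval
    intro mm hdm
    by_contra hlt
    push_neg at hlt
    interval_cases mm
    · exact hdm
    · exact hDle1 hdm
  simpa using this

end DirectionA

section DirectionB

def encB (h : Fin 5 → Bool) : ℕ :=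
  (cond (h 0) 1 0) + 2 * (cond (h 1) 1 0) + 4 * (cond (h 2) 1 0) +
    8 * (cond (h 3) 1 0) + 16 * (cond (h 4) 1 0)

def BIGB : ℕ :=
  3958073728144594204331779978077101847308275549659986124080067453520414670011466593767287702699192571437654927500553591039146818092679758382105627387838408470838699047532762833335912785014868529755194772990271238513813923465860187979217118760054482302932590739285530655428361605193218247406891969050988678772624595386428389140441242208925178157927250140429233565708989366622991528168368948686706283975844161003096662702269093070821091372721257350010098576493771500626407094014344134741671319724345145783781637596547442283587499317435173749909363011771557195420090809326520216823692572106670415100947590187001387234906988893983073038113032352644284677327140692852916980458119865844500452671899072006161320495282194529110539375626991420490683058386418333910675703221118935021226531952647428560921612574369670468139834824729518175715440168334403094134241336345925783702939132138773628810037442023759133594402402157097129022167527081317428519908708646594825053515222441970525877249640762836976072767877966444910548517759384373694153334879960464279143406393675965491304221084557975655001294425365453331688670308491369279660319488870645786248492517574223309773664189421474383622866993878943698024639087049035024310691815745170306433682664205528926274391485643895140604567967203470446512327715511640676991861233060311182689914007952208478636778680281400620036432881647763992874175031277146575394057010292572319926022891825885837703360397405526452620639190076885637830002938552650041108526394195343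286592241940344395682095186366232863225607909181815439675586571975587011410059332668543297546746122554050449632246058845444714420504923960782441067758921986326958940802150671881885036622415233483388172939899168276644186374084515473999552008910621675650126268074137810431237442039208001906792785387366577905679154815377359357247214647191120810866507721540608

def gB (h' h : Fin 5 → Bool) : ℕ := BIGB / 64 ^ (32 * encB h' + encB h) % 64

noncomputable def σB : Pref (Fin 5) := fun h' _ h => ((gB h' h : ℕ) : ℝ)

def h0B : Fin 5 → Bool := fun i => decide (i ≠ 0)

def hTopB : Fin 5 → Bool := fun _ => true

def witB : ℕ → (Fin 5 × Bool) × (Fin 5 × Bool)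
  | 0 => (((2 : Fin 5), false), ((0 : Fin 5), false))
  | 1 => (((0 : Fin 5), true), ((1 : Fin 5), false))
  | 2 => (((1 : Fin 5), true), ((0 : Fin 5), false))
  | 3 => (((1 : Fin 5), true), ((2 : Fin 5), false))
  | 4 => (((2 : Fin 5), true), ((1 : Fin 5), false))
  | 5 => (((3 : Fin 5), false), ((1 : Fin 5), false))
  | 6 => (((2 : Fin 5), true), ((0 : Fin 5), false))
  | 7 => (((2 : Fin 5), true), ((3 : Fin 5), false))
  | 8 => (((3 : Fin 5), true), ((2 : Fin 5), false))
  | 9 => (((2 : Fin 5), false), ((1 : Fin 5), false))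
  | 10 => (((0 : Fin 5), false), ((4 : Fin 5), false))
  | 11 => (((2 : Fin 5), false), ((4 : Fin 5), false))
  | 12 => (((3 : Fin 5), true), ((1 : Fin 5), false))
  | 13 => (((1 : Fin 5), false), ((4 : Fin 5), false))
  | 14 => (((3 : Fin 5), true), ((0 : Fin 5), false))
  | 15 => (((4 : Fin 5), false), ((4 : Fin 5), false))
  | 16 => (((4 : Fin 5), true), ((2 : Fin 5), false))
  | 17 => (((3 : Fin 5), false), ((2 : Fin 5), false))
  | 18 => (((0 : Fin 5), false), ((3 : Fin 5), false))
  | 19 => (((2 : Fin 5), false), ((3 : Fin 5), false))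
  | 20 => (((4 : Fin 5), true), ((1 : Fin 5), false))
  | 21 => (((1 : Fin 5), false), ((3 : Fin 5), false))
  | 22 => (((4 : Fin 5), true), ((0 : Fin 5), false))
  | 23 => (((3 : Fin 5), false), ((3 : Fin 5), false))
  | 24 => (((1 : Fin 5), false), ((0 : Fin 5), false))
  | 25 => (((1 : Fin 5), false), ((2 : Fin 5), false))
  | 26 => (((0 : Fin 5), false), ((2 : Fin 5), false))
  | 27 => (((2 : Fin 5), false), ((2 : Fin 5), false))
  | 28 => (((0 : Fin 5), false), ((1 : Fin 5), false))
  | 29 => (((1 : Fin 5), false), ((1 : Fin 5), false))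
  | 30 => (((0 : Fin 5), false), ((0 : Fin 5), false))
  | 31 => (((0 : Fin 5), true), ((0 : Fin 5), true))
  | _ => (((0 : Fin 5), false), ((0 : Fin 5), false))

def vsB (H' : Finset (Fin 5 → Bool)) (S : Finset (Fin 5 × Bool)) : Finset (Fin 5 → Bool) :=
  H'.filter fun h => ∀ z ∈ S, h z.1 = z.2

def amB (H' : Finset (Fin 5 → Bool)) (h : Fin 5 → Bool) : Finset (Fin 5 → Bool) :=
  H'.filter fun h' => ∀ h'' ∈ H', gB h' h ≤ gB h'' h

lemma vsB_eq (H' : Finset (Fin 5 → Bool)) (S : Finset (Fin 5 × Bool)) :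
    verSpace H' S = vsB H' S := by
  ext h; simp [verSpace, vsB]

lemma amB_eq (H' : Finset (Fin 5 → Bool)) (h : Fin 5 → Bool) :
    argminSet σB H' h = amB H' h := by
  ext h'; simp [argminSet, amB, σB, Nat.cast_le]

set_option maxRecDepth 20000 in
set_option exponentiation.threshold 10000 in
lemma factB1 : ∀ h h' : Fin 5 → Bool, h ≠ h0B → (h' = h → gB h' h = 0) ∧
    (h' ≠ h → 1 ≤ gB h' h) ∧ (h' ≠ h0B → gB h' h < gB h0B h) := by decide

set_option maxRecDepth 20000 in
set_option exponentiation.threshold 10000 in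
lemma factB2 : gB hTopB h0B = 0 ∧ gB h0B h0B = 1 ∧
    (∀ h' : Fin 5 → Bool, h' ≠ hTopB → h' ≠ h0B → 2 ≤ gB h' h0B) := by decide



lemma σB_apply (h' : Fin 5 → Bool) (H' : Finset (Fin 5 → Bool)) (h : Fin 5 → Bool) :
    σB h' H' h = ((gB h' h : ℕ) : ℝ) := rfl

lemma CFB : CollusionFree (Finset.univ : Finset (Fin 5 → Bool)) σB := by
  intro h _ H' _ hhat heq S hS
  have hhatarg : hhat ∈ argminSet σB H' h := by
    rw [heq]; exact Finset.mem_singleton_self _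
  have hhatmem : hhat ∈ H' := (argminSet_mem.1 hhatarg).1
  have hhatmin : ∀ u ∈ H', gB hhat h ≤ gB u h := by
    intro u hu
    have := (argminSet_mem.1 hhatarg).2 u hu
    rw [σB_apply, σB_apply] at this
    exact_mod_cast this
  have hhatW : hhat ∈ verSpace H' S := verSpace_mem.2 ⟨hhatmem, hS⟩
  by_cases hh0 : hhat = h0B
  · subst hh0
    by_cases hh : h = h0B
    · subst hh
      have htopnot : hTopB ∉ H' := by
        intro hmem
        have h1 := hhatmin hTopB hmem
        rw [factB2.1, factB2.2.1] at h1
        omega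
      ext u
      rw [argminSet_mem, Finset.mem_singleton]
      constructor
      · rintro ⟨huW, humin⟩
        by_contra hune
        have h2 : gB u h0B ≤ gB h0B h0B := by
          have := humin h0B hhatW
          rw [σB_apply, σB_apply] at this
          exact_mod_cast this
        have h3 : u ≠ hTopB := fun hEq => htopnot (hEq ▸ verSpace_subset _ _ huW)
        have h4 := factB2.2.2 u h3 hune
        rw [factB2.2.1] at h2
        omega
      · rintro rfl
        refine ⟨hhatW, ?_⟩
        intro v hv
        have hvH : v ∈ H' := verSpace_subset _ _ hv
        rw [σB_apply, σB_apply]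
        have : gB h0B h0B ≤ gB v h0B := by
          by_cases hvt : v = hTopB
          · exact absurd (hvt ▸ hvH) htopnot
          · by_cases hv0 : v = h0B
            · rw [hv0]
            · rw [factB2.2.1]
              have := factB2.2.2 v hvt hv0
              omega
        exact_mod_cast this
    · have hsub : H' = {h0B} := by
        apply Finset.Subset.antisymm
        · intro u hu
          rw [Finset.mem_singleton]
          by_contra hune
          have h2 := hhatmin u hu
          have h3 := (factB1 h u hh).2.2 hune
          omega
        · simpa using hhatmem
      have hW : verSpace H' S = {h0B} := by
        apply Finset.Subset.antisymm
        · intro u hu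
          have := verSpace_subset H' S hu
          rwa [hsub] at this
        · intro u hu
          rw [Finset.mem_singleton] at hu; subst hu
          exact hhatW
      rw [hW]
      ext u
      rw [argminSet_mem, Finset.mem_singleton]
      constructor
      · rintro ⟨hu, -⟩
        simpa using hu
      · rintro rfl
        exact ⟨by simp, fun v hv => by
          rw [Finset.mem_singleton] at hv; subst hv; exact le_refl _⟩
  · ext u
    rw [argminSet_mem, Finset.mem_singleton]
    constructor
    · rintro ⟨huW, humin⟩
      by_contra hune
      have h2 : gB u hhat ≤ gB hhat hhat := by
        have := humin hhat hhatW
        rw [σB_apply, σB_apply] at this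
        exact_mod_cast this
      rw [(factB1 hhat hhat hh0).1 rfl] at h2
      have := (factB1 hhat u hh0).2.1 hune
      omega
    · rintro rfl
      refine ⟨hhatW, ?_⟩
      intro v hv
      rw [σB_apply, σB_apply]
      have hx : gB u u ≤ gB v u := by
        rw [(factB1 u u hh0).1 rfl]
        omega
      exact_mod_cast hx

lemma σB_mem : σB ∈ SigmaLocal (Finset.univ : Finset (Fin 5 → Bool)) :=
  ⟨CFB, fun h' h => ((gB h' h : ℕ) : ℝ), fun _ _ _ => rfl⟩


set_option maxRecDepth 40000 in
set_option exponentiation.threshold 10000 in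
lemma keyB : ∀ hstar : Fin 5 → Bool,
    (hstar (witB (encB hstar)).1.1 = (witB (encB hstar)).1.2) ∧
    ((amB (vsB Finset.univ {(witB (encB hstar)).1}) h0B = {hstar}) ∨
     ((hstar (witB (encB hstar)).2.1 = (witB (encB hstar)).2.2) ∧
      ∀ s ∈ amB (vsB Finset.univ {(witB (encB hstar)).1}) h0B,
        amB (vsB (vsB Finset.univ {(witB (encB hstar)).1}) {(witB (encB hstar)).2}) s
          = {hstar})) := by decide

lemma teachB (hstar : Fin 5 → Bool) : Dle σB 2 Finset.univ h0B hstar := by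
  obtain ⟨hz, hrest⟩ := keyB hstar
  rcases hrest with hc | ⟨hz', hall⟩
  · refine Or.inl ⟨(witB (encB hstar)).1, hz, ?_⟩
    simp only [Cand]
    rw [amB_eq, vsB_eq]
    exact hc
  · refine Or.inr ⟨(witB (encB hstar)).1, hz, ?_⟩
    intro h'' hmem
    simp only [Cand] at hmem
    rw [amB_eq, vsB_eq] at hmem
    refine Or.inl ⟨(witB (encB hstar)).2, hz', ?_⟩
    simp only [Cand]
    rw [amB_eq, vsB_eq, vsB_eq]
    exact hall h'' hmem


def flip5 (i : Fin 5) (h : Fin 5 → Bool) : Fin 5 → Bool := fun j => if j = i then !(h j) else h j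

lemma flip5_invol (i : Fin 5) : Function.Involutive (flip5 i) := by
  intro h; funext j; by_cases hj : j = i <;> simp [flip5, hj]

lemma flip5_ne (i : Fin 5) (h : Fin 5 → Bool) : h ≠ flip5 i h := by
  intro hEq
  have h1 := congrFun hEq i
  simp [flip5] at h1

lemma flip5_agree {i j : Fin 5} (h : Fin 5 → Bool) (hj : j ≠ i) : flip5 i h j = h j := by
  simp [flip5, hj]

lemma clashB (T : (Fin 5 → Bool) → Finset (Fin 5)) (hT : ∀ h, (T h).card ≤ 2) :
    ∃ h i, i ∉ T h ∧ i ∉ T (flip5 i h) := by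
  by_contra hco
  push_neg at hco
  have key : ∀ (h : Fin 5 → Bool) (i : Fin 5),
      (1:ℕ) ≤ (if i ∈ T h then 1 else 0) + (if i ∈ T (flip5 i h) then 1 else 0) := by
    intro h i
    rcases Classical.em (i ∈ T h) with hm | hm
    · simp [hm]
    · simp [hm, hco h i hm]
  have hsum1 : ∀ h : Fin 5 → Bool, (∑ i : Fin 5, if i ∈ T h then (1:ℕ) else 0) ≤ 2 := by
    intro h
    calc (∑ i : Fin 5, if i ∈ T h then (1:ℕ) else 0) = (T h).card := by
          rw [Finset.sum_ite_mem, Finset.univ_inter, Finset.card_eq_sum_ones]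
      _ ≤ 2 := hT h
  have hswap : (∑ h : Fin 5 → Bool, ∑ i : Fin 5, if i ∈ T (flip5 i h) then (1:ℕ) else 0)
      = ∑ h : Fin 5 → Bool, ∑ i : Fin 5, if i ∈ T h then (1:ℕ) else 0 := by
    rw [Finset.sum_comm]
    conv_rhs => rw [Finset.sum_comm]
    refine Finset.sum_congr rfl ?_
    intro i _
    exact Finset.sum_nbij' (fun h => flip5 i h) (fun h => flip5 i h)
      (fun _ _ => Finset.mem_univ _) (fun _ _ => Finset.mem_univ _)
      (fun h _ => flip5_invol i h) (fun h _ => flip5_invol i h)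
      (fun h _ => rfl)
  have hbig : (160:ℕ) ≤ 128 := by
    calc (160:ℕ) = ∑ _h : Fin 5 → Bool, ∑ _i : Fin 5, (1:ℕ) := by
          simp [Finset.sum_const, Finset.card_univ]
      _ ≤ ∑ h : Fin 5 → Bool, ∑ i : Fin 5,
            ((if i ∈ T h then (1:ℕ) else 0) + (if i ∈ T (flip5 i h) then 1 else 0)) :=
          Finset.sum_le_sum fun h _ => Finset.sum_le_sum fun i _ => key h i
      _ = (∑ h : Fin 5 → Bool, ∑ i : Fin 5, if i ∈ T h then (1:ℕ) else 0)
          + (∑ h : Fin 5 → Bool, ∑ i : Fin 5, if i ∈ T (flip5 i h) then (1:ℕ) else 0) := by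
          rw [← Finset.sum_add_distrib]
          exact Finset.sum_congr rfl fun h _ => Finset.sum_add_distrib
      _ = (∑ h : Fin 5 → Bool, ∑ i : Fin 5, if i ∈ T h then (1:ℕ) else 0)
          + (∑ h : Fin 5 → Bool, ∑ i : Fin 5, if i ∈ T h then (1:ℕ) else 0) := by rw [hswap]
      _ ≤ 64 + 64 := by
          have hs : (∑ h : Fin 5 → Bool, ∑ i : Fin 5, if i ∈ T h then (1:ℕ) else 0) ≤ 64 := by
            calc (∑ h : Fin 5 → Bool, ∑ i : Fin 5, if i ∈ T h then (1:ℕ) else 0)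
                ≤ ∑ _h : Fin 5 → Bool, (2:ℕ) := Finset.sum_le_sum fun h _ => hsum1 h
              _ = 64 := by simp [Finset.sum_const, Finset.card_univ]
          omega
  omega

lemma lowerB : (3:ℕ∞) ≤ famTD (Finset.univ : Finset (Fin 5 → Bool)) h0B
    (SigmaGVS Finset.univ) := by
  apply le_famTD
  rintro σ ⟨hcf, g, hg⟩
  by_contra hnot
  push_neg at hnot
  have hall : ∀ hstar : Fin 5 → Bool, Dle σ 2 Finset.univ h0B hstar := by
    intro hstar
    have h1 : Dval σ Finset.univ h0B hstar < 3 :=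
      lt_of_le_of_lt (le_TDpref (Finset.mem_univ _)) hnot
    by_contra hd2
    have h2 : ∀ m : ℕ, Dle σ m Finset.univ h0B hstar → 3 ≤ m := by
      intro m hm
      by_contra hmlt
      push_neg at hmlt
      exact hd2 (Dle_mono 2 m (by omega) _ _ _ hm)
    have h3 := le_Dval h2
    rw [show ((3:ℕ):ℕ∞) = (3:ℕ∞) by rfl] at h3
    exact absurd h3 (not_le.mpr h1)
  choose S hcard hcons cur harg using fun hstar => extract (Finset.mem_univ hstar) (hall hstar)
  have hT2 : ∀ hh : Fin 5 → Bool, ((fun hh => (S hh).image Prod.fst) hh).card ≤ 2 := by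
    intro hh
    convert hcard hh using 2
    congr!
  obtain ⟨h, i, hi1, hi2⟩ := clashB (fun hh => (S hh).image Prod.fst) hT2
  have hne : h ≠ flip5 i h := flip5_ne i h
  have hconsX : ConsistentWith (flip5 i h) (S h) := by
    intro z hz
    have hz1 : z.1 ≠ i := fun hEq => hi1 (Finset.mem_image.2 ⟨z, hz, hEq⟩)
    rw [flip5_agree h hz1]
    exact hcons h z hz
  have hconsY : ConsistentWith h (S (flip5 i h)) := by
    intro z hz
    have hz1 : z.1 ≠ i := fun hEq => hi2 (Finset.mem_image.2 ⟨z, hz, hEq⟩)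
    rw [← flip5_agree h hz1]
    exact hcons (flip5 i h) z hz
  have hA : argminSet σ (verSpace Finset.univ (S h)) h = {h} := by
    rw [argminSet_gvs g hg _ h (cur h)]; exact harg h
  have hB : argminSet σ (verSpace Finset.univ (S (flip5 i h))) (flip5 i h) = {flip5 i h} := by
    rw [argminSet_gvs g hg _ (flip5 i h) (cur (flip5 i h))]; exact harg (flip5 i h)
  have E1 := hcf h (Finset.mem_univ h) _ (verSpace_subset _ _) h hA (S (flip5 i h)) hconsY
  have E2 := hcf (flip5 i h) (Finset.mem_univ _) _ (verSpace_subset _ _) (flip5 i h) hB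
    (S h) hconsX
  rw [verSpace_comm] at E2
  rw [argminSet_gvs g hg _ (flip5 i h) h] at E2
  rw [E1] at E2
  exact hne (Finset.singleton_injective E2)


lemma upperB : famTD (Finset.univ : Finset (Fin 5 → Bool)) h0B (SigmaLocal Finset.univ)
    ≤ 2 := by
  refine le_trans (famTD_le σB_mem) (TDpref_le ?_)
  intro hstar _
  have := Dval_le (teachB hstar)
  simpa using this
/-- neither of `Σ_gvs` and `Σ_local` dominates the other. -/
theorem gvs_local_incomparable :
    (∃ (X : Type) (_ : Fintype X) (Hc : Finset (X → Bool)) (h0 : X → Bool),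
      h0 ∈ Hc ∧ famTD Hc h0 (SigmaGVS Hc) < famTD Hc h0 (SigmaLocal Hc)) ∧
    (∃ (X : Type) (_ : Fintype X) (Hc : Finset (X → Bool)) (h0 : X → Bool),
      h0 ∈ Hc ∧ famTD Hc h0 (SigmaLocal Hc) < famTD Hc h0 (SigmaGVS Hc)) := by
  constructor
  · refine ⟨Bool, inferInstance, Finset.univ, fFF, Finset.mem_univ _, ?_⟩
    calc famTD Finset.univ fFF (SigmaGVS Finset.univ) ≤ 1 := upperA
      _ < 2 := by norm_num
      _ ≤ famTD Finset.univ fFF (SigmaLocal Finset.univ) := lowerA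
  · refine ⟨Fin 5, inferInstance, Finset.univ, h0B, Finset.mem_univ _, ?_⟩
    calc famTD Finset.univ h0B (SigmaLocal Finset.univ) ≤ 2 := upperB
      _ < 3 := by norm_num
      _ ≤ famTD Finset.univ h0B (SigmaGVS Finset.univ) := lowerB
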